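/- arXiv:2302.00037 — 2 statements merged into one kernel-verified Lean document; each statement's English description precedes it below -/
import Mathlib

section
/- There exists n₀ such that for all n ≥ n₀ with 5 | n there exists a family F ⊆ P(n,5) with |F| ≥ 2^{0.2n} such that for any two distinct G, G' ∈ F there is no binary tree T with leaf set V satisfying both ω_G(T) < n²/400 and ω_{G'}(T) < n²/400. -/
open Finset

inductive BTree (V : Type) : Type
  | leaf : V → BTree V
  | node : BTree V → BTree V → BTree V
  deriving DecidableEq

namespace BTree

variable {V : Type} [DecidableEq V]

def leavesList : BTree V → List V
  | leaf x => [x]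
  | node L R => L.leavesList ++ R.leavesList

def leaves (T : BTree V) : Finset V :=
  T.leavesList.toFinset

def cluster : BTree V → V → V → Finset V
  | leaf x, _, _ => {x}
  | node L R, u, v =>
    if u ∈ L.leaves ∧ v ∈ L.leaves then L.cluster u v
    else if u ∈ R.leaves ∧ v ∈ R.leaves then R.cluster u v
    else (node L R).leaves

end BTree

section
variable {V : Type} [Fintype V] [DecidableEq V]

def IsHC (T : BTree V) : Prop :=
  T.leavesList.Nodup ∧ T.leaves = Finset.univ

def IsWeight (w : V → V → ℝ) : Prop :=
  (∀ u v, 0 ≤ w u v) ∧ (∀ u v, w u v = w v u) ∧ ∀ u, w u u = 0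

noncomputable def cost (w : V → V → ℝ) (T : BTree V) : ℝ :=
  (1 / 2) * ∑ u : V, ∑ v : V, w u v * ((T.cluster u v).card : ℝ)

noncomputable def optCost (w : V → V → ℝ) : ℝ :=
  sInf {c : ℝ | ∃ T : BTree V, IsHC T ∧ cost w T = c}

noncomputable def graphDist (w w' : V → V → ℝ) : ℝ :=
  (1 / 2) * ∑ u : V, ∑ v : V, |w u v - w' u v|

noncomputable def cutW (w : V → V → ℝ) (A B : Finset V) : ℝ :=
  ∑ a ∈ A, ∑ b ∈ B, w a b

def IsEdgeDP (A : (V → V → ℝ) → PMF (BTree V)) (ε : ℝ) : Prop :=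
  ∀ w w' : V → V → ℝ, IsWeight w → IsWeight w' → graphDist w w' ≤ 1 →
    ∀ S : Set (BTree V),
      (A w').toOuterMeasure S ≤ ENNReal.ofReal (Real.exp ε) * (A w).toOuterMeasure S

end

/-- The weight function of a vertex-disjoint union of `m` cycles of length 5 (all present
edges having weight 1), described by a bijection `σ` sending each vertex to a pair
(cycle index, position on the cycle). -/
def cycleW {V : Type} {m : ℕ} (σ : V ≃ Fin m × ZMod 5) : V → V → ℝ := fun u v =>
  if (σ u).1 = (σ v).1 ∧ ((σ u).2 = (σ v).2 + 1 ∨ (σ v).2 = (σ u).2 + 1) then 1 else 0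

set_option linter.unusedSectionVars false
namespace BTree
variable {V : Type} [DecidableEq V]

lemma leaves_node (L R : BTree V) : (node L R).leaves = L.leaves ∪ R.leaves := by
  simp [leaves, leavesList, List.toFinset_append]

lemma nodup_left {L R : BTree V} (h : (node L R).leavesList.Nodup) : L.leavesList.Nodup := by
  simp only [leavesList, List.nodup_append] at h; exact h.1

lemma nodup_right {L R : BTree V} (h : (node L R).leavesList.Nodup) : R.leavesList.Nodup := by
  simp only [leavesList, List.nodup_append] at h; exact h.2.1

lemma disjoint_leaves {L R : BTree V} (h : (node L R).leavesList.Nodup) :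
    Disjoint L.leaves R.leaves := by
  simp only [leavesList, List.nodup_append] at h
  rw [Finset.disjoint_left]
  intro a haL haR
  simp only [leaves, List.mem_toFinset] at haL haR
  exact h.2.2 a haL a haR rfl

lemma card_leaves_node {L R : BTree V} (h : (node L R).leavesList.Nodup) :
    (node L R).leaves.card = L.leaves.card + R.leaves.card := by
  rw [leaves_node, Finset.card_union_of_disjoint (disjoint_leaves h)]

/-- The key structural lemma: any tree with more than `2n/3` leaves (for `n ≥ 2`) contains a
balanced subtree whose leaves `A` satisfy `n/3 ≤ |A| ≤ 2n/3`, and any pair crossing `A`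
has a large cluster. -/
lemma exists_balanced (n : ℕ) (hn : 2 ≤ n) :
    ∀ T : BTree V, T.leavesList.Nodup → 2 * n < 3 * T.leaves.card →
    ∃ A : Finset V, A ⊆ T.leaves ∧ n ≤ 3 * A.card ∧ 3 * A.card ≤ 2 * n ∧
      ∀ u ∈ A, ∀ v ∈ T.leaves, v ∉ A → 2 * n ≤ 3 * (T.cluster u v).card := by
  intro T
  induction T with
  | leaf x =>
      intro _ hbig
      simp [leaves, leavesList] at hbig
      omega
  | node L R ihL ihR =>
      intro hnd hbig
      have hdisj := disjoint_leaves hnd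
      have hcard := card_leaves_node hnd
      have hLR : (node L R).leaves = L.leaves ∪ R.leaves := leaves_node L R
      rcases le_total R.leaves.card L.leaves.card with hbigside | hbigside
      · -- L is the big side
        by_cases hsz : 3 * L.leaves.card ≤ 2 * n
        · refine ⟨L.leaves, ?_, ?_, hsz, ?_⟩
          · rw [hLR]; exact Finset.subset_union_left
          · omega
          · intro u hu v hv hvA
            have hvR : v ∈ R.leaves := by
              rw [hLR, Finset.mem_union] at hv; tauto
            have huR : u ∉ R.leaves := Finset.disjoint_left.mp hdisj hu
            have : (node L R).cluster u v = (node L R).leaves := by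
              rw [cluster]
              rw [if_neg (by tauto), if_neg (by tauto)]
            rw [this]
            omega
        · push_neg at hsz
          obtain ⟨A, hA1, hA2, hA3, hA4⟩ := ihL (nodup_left hnd) hsz
          refine ⟨A, ?_, hA2, hA3, ?_⟩
          · rw [hLR]; exact hA1.trans Finset.subset_union_left
          · intro u hu v hv hvA
            have huL : u ∈ L.leaves := hA1 hu
            have huR : u ∉ R.leaves := Finset.disjoint_left.mp hdisj huL
            by_cases hvL : v ∈ L.leaves
            · have : (node L R).cluster u v = L.cluster u v := by
                rw [cluster, if_pos ⟨huL, hvL⟩]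
              rw [this]; exact hA4 u hu v hvL hvA
            · have : (node L R).cluster u v = (node L R).leaves := by
                rw [cluster, if_neg (by tauto), if_neg (by tauto)]
              rw [this]
              omega
      · -- R is the big side
        by_cases hsz : 3 * R.leaves.card ≤ 2 * n
        · refine ⟨R.leaves, ?_, ?_, hsz, ?_⟩
          · rw [hLR]; exact Finset.subset_union_right
          · omega
          · intro u hu v hv hvA
            have hvL : v ∈ L.leaves := by
              rw [hLR, Finset.mem_union] at hv; tauto
            have huL : u ∉ L.leaves := Finset.disjoint_right.mp hdisj hu
            have : (node L R).cluster u v = (node L R).leaves := by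
              rw [cluster, if_neg (by tauto), if_neg (by tauto)]
            rw [this]
            omega
        · push_neg at hsz
          obtain ⟨A, hA1, hA2, hA3, hA4⟩ := ihR (nodup_right hnd) hsz
          refine ⟨A, ?_, hA2, hA3, ?_⟩
          · rw [hLR]; exact hA1.trans Finset.subset_union_right
          · intro u hu v hv hvA
            have huR : u ∈ R.leaves := hA1 hu
            have huL : u ∉ L.leaves := Finset.disjoint_right.mp hdisj huR
            by_cases hvR : v ∈ R.leaves
            · have : (node L R).cluster u v = R.cluster u v := by
                rw [cluster, if_neg (by tauto), if_pos ⟨huR, hvR⟩]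
              rw [this]; exact hA4 u hu v hvR hvA
            · have : (node L R).cluster u v = (node L R).leaves := by
                rw [cluster, if_neg (by tauto), if_neg (by tauto)]
              rw [this]
              omega

end BTree
namespace BTree
variable {V : Type} [DecidableEq V]

lemma cluster_comm (T : BTree V) (u v : V) : T.cluster u v = T.cluster v u := by
  induction T with
  | leaf x => rfl
  | node L R ihL ihR =>
      by_cases h1 : u ∈ L.leaves ∧ v ∈ L.leaves
      · simp only [cluster, if_pos h1, if_pos (⟨h1.2, h1.1⟩ : v ∈ L.leaves ∧ u ∈ L.leaves)]
        exact ihL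
      · have h1' : ¬(v ∈ L.leaves ∧ u ∈ L.leaves) := fun hh => h1 ⟨hh.2, hh.1⟩
        by_cases h2 : u ∈ R.leaves ∧ v ∈ R.leaves
        · simp only [cluster, if_neg h1, if_neg h1', if_pos h2,
            if_pos (⟨h2.2, h2.1⟩ : v ∈ R.leaves ∧ u ∈ R.leaves)]
          exact ihR
        · have h2' : ¬(v ∈ R.leaves ∧ u ∈ R.leaves) := fun hh => h2 ⟨hh.2, hh.1⟩
          simp only [cluster, if_neg h1, if_neg h1', if_neg h2, if_neg h2']

end BTree

namespace HCPack

open Finset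

variable {V : Type} [Fintype V] [DecidableEq V]

/-- If every pair crossing `A` has a cluster of size at least `2n/3`, the cost is at least
`(2n/3) · cut(A)`. -/
lemma cost_ge_cut (w : V → V → ℝ) (hw0 : ∀ u v, 0 ≤ w u v) (hws : ∀ u v, w u v = w v u)
    (T : BTree V) (n : ℕ) (A : Finset V)
    (hcl : ∀ u ∈ A, ∀ v, v ∉ A → 2 * n ≤ 3 * (T.cluster u v).card) :
    ((2 * n : ℝ) / 3) * cutW w A Aᶜ ≤ cost w T := by
  classical
  have key : ∀ (B C : Finset V), (∀ u ∈ B, ∀ v ∈ C, 2 * n ≤ 3 * (T.cluster u v).card) →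
      ((2 * n : ℝ) / 3) * (∑ a ∈ B, ∑ b ∈ C, w a b) ≤
        ∑ a ∈ B, ∑ b ∈ C, w a b * ((T.cluster a b).card : ℝ) := by
    intro B C h
    rw [Finset.mul_sum]
    refine Finset.sum_le_sum ?_
    intro a ha
    rw [Finset.mul_sum]
    refine Finset.sum_le_sum ?_
    intro b hb
    rw [mul_comm ((2 * (n:ℝ)) / 3)]
    refine mul_le_mul_of_nonneg_left ?_ (hw0 a b)
    have := h a ha b hb
    have h3 : (2 * (n:ℝ)) ≤ 3 * ((T.cluster a b).card : ℝ) := by exact_mod_cast this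
    linarith
  -- full sum splits
  have keysub : ∀ (B C : Finset V),
      (∑ a ∈ B, ∑ b ∈ C, w a b * ((T.cluster a b).card : ℝ))
        = ∑ p ∈ B ×ˢ C, w p.1 p.2 * ((T.cluster p.1 p.2).card : ℝ) := by
    intro B C; rw [Finset.sum_product]
  have hsplit : ∑ p ∈ (A ×ˢ Aᶜ) ∪ (Aᶜ ×ˢ A), w p.1 p.2 * ((T.cluster p.1 p.2).card : ℝ)
      ≤ ∑ p ∈ (univ : Finset V) ×ˢ (univ : Finset V),
          w p.1 p.2 * ((T.cluster p.1 p.2).card : ℝ) := by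
    refine Finset.sum_le_sum_of_subset_of_nonneg ?_ ?_
    · intro p _; simp
    · intro p _ _
      exact mul_nonneg (hw0 _ _) (by positivity)
  have hdisj : Disjoint (A ×ˢ Aᶜ) (Aᶜ ×ˢ A) := by
    rw [Finset.disjoint_left]
    rintro ⟨a, b⟩ h1 h2
    simp only [Finset.mem_product, Finset.mem_compl] at h1 h2
    exact h2.1 h1.1
  have hunion : ∑ p ∈ (A ×ˢ Aᶜ) ∪ (Aᶜ ×ˢ A), w p.1 p.2 * ((T.cluster p.1 p.2).card : ℝ)
      = (∑ a ∈ A, ∑ b ∈ Aᶜ, w a b * ((T.cluster a b).card : ℝ))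
        + ∑ a ∈ Aᶜ, ∑ b ∈ A, w a b * ((T.cluster a b).card : ℝ) := by
    rw [Finset.sum_union hdisj, keysub, keysub]
  have h1 : ((2 * n : ℝ) / 3) * cutW w A Aᶜ
      ≤ ∑ a ∈ A, ∑ b ∈ Aᶜ, w a b * ((T.cluster a b).card : ℝ) := by
    refine key A Aᶜ ?_
    intro u hu v hv
    exact hcl u hu v (Finset.mem_compl.mp hv)
  have h2 : ((2 * n : ℝ) / 3) * cutW w A Aᶜ
      ≤ ∑ a ∈ Aᶜ, ∑ b ∈ A, w a b * ((T.cluster a b).card : ℝ) := by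
    have hc : cutW w A Aᶜ = ∑ a ∈ Aᶜ, ∑ b ∈ A, w a b := by
      unfold cutW
      rw [Finset.sum_comm]
      congr 1; ext a; congr 1; ext b; exact hws b a
    rw [hc]
    refine key Aᶜ A ?_
    intro u hu v hv
    rw [BTree.cluster_comm]
    exact hcl v hv u (Finset.mem_compl.mp hu)
  have hcost : cost w T = (1/2) * ∑ p ∈ (univ : Finset V) ×ˢ (univ : Finset V),
      w p.1 p.2 * ((T.cluster p.1 p.2).card : ℝ) := by
    unfold cost
    rw [Finset.sum_product]
  rw [hcost]
  linarith
end HCPack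
namespace HCPack
open Finset

variable {V : Type} [Fintype V] [DecidableEq V] {m : ℕ}

/-- Blocks of `σ` that are split by `A`. -/
def splitsF (σ : V ≃ Fin m × ZMod 5) (A : Finset V) : Finset (Fin m) :=
  univ.filter (fun i => (∃ x, σ.symm (i, x) ∈ A) ∧ (∃ x, σ.symm (i, x) ∉ A))

lemma zmod5_cross (s : Finset (ZMod 5)) (h1 : s ≠ ∅) (h2 : s ≠ univ) :
    2 ≤ ∑ x : ZMod 5, ∑ y : ZMod 5,
      (if x ∈ s ∧ y ∉ s ∧ (x = y + 1 ∨ y = x + 1) then 1 else 0) := by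
  revert h1 h2
  revert s
  decide

lemma cycleW_nonneg (σ : V ≃ Fin m × ZMod 5) (u v : V) : 0 ≤ cycleW σ u v := by
  unfold cycleW; split_ifs <;> norm_num

lemma cycleW_symm (σ : V ≃ Fin m × ZMod 5) (u v : V) : cycleW σ u v = cycleW σ v u := by
  unfold cycleW
  congr 1
  simp only [eq_iff_iff]
  constructor
  · rintro ⟨h, h'⟩; exact ⟨h.symm, h'.symm⟩
  · rintro ⟨h, h'⟩; exact ⟨h.symm, h'.symm⟩

lemma cut_as_sum (σ : V ≃ Fin m × ZMod 5) (A : Finset V) :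
    cutW (cycleW σ) A Aᶜ = ∑ i : Fin m, ∑ x : ZMod 5, ∑ y : ZMod 5,
      (if σ.symm (i, x) ∈ A ∧ σ.symm (i, y) ∉ A ∧ (x = y + 1 ∨ y = x + 1)
        then (1 : ℝ) else 0) := by
  unfold cutW
  have e1 : ∀ (f : V → ℝ), ∑ b ∈ Aᶜ, f b = ∑ b : V, if b ∉ A then f b else 0 := by
    intro f
    have hAc : Aᶜ = univ.filter (fun b => b ∉ A) := by ext b; simp
    conv_lhs => rw [hAc]
    rw [Finset.sum_filter]
  have e2 : ∀ (f : V → ℝ), ∑ a ∈ A, f a = ∑ a : V, if a ∈ A then f a else 0 := by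
    intro f
    have hAe : A = univ.filter (fun a => a ∈ A) := by ext a; simp
    conv_lhs => rw [hAe]
    rw [Finset.sum_filter]
  have step2 : ∑ a ∈ A, ∑ b ∈ Aᶜ, cycleW σ a b
      = ∑ a : V, ∑ b : V, (if a ∈ A ∧ b ∉ A then cycleW σ a b else 0) := by
    rw [e2]
    refine Finset.sum_congr rfl ?_
    intro a _
    by_cases ha : a ∈ A
    · rw [if_pos ha, e1]
      refine Finset.sum_congr rfl ?_
      intro b _
      by_cases hb : b ∉ A <;> simp [ha, hb]
    · rw [if_neg ha, eq_comm]
      refine Finset.sum_eq_zero ?_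
      intro b _
      simp [ha]
  rw [step2]
  have step3 : ∑ a : V, ∑ b : V, (if a ∈ A ∧ b ∉ A then cycleW σ a b else 0)
      = ∑ p : Fin m × ZMod 5, ∑ q : Fin m × ZMod 5,
        (if σ.symm p ∈ A ∧ σ.symm q ∉ A then cycleW σ (σ.symm p) (σ.symm q) else 0) := by
    rw [← Equiv.sum_comp σ.symm
      (fun a => ∑ b : V, (if a ∈ A ∧ b ∉ A then cycleW σ a b else 0))]
    refine Finset.sum_congr rfl ?_
    intro p _
    rw [← Equiv.sum_comp σ.symm
      (fun b => (if σ.symm p ∈ A ∧ b ∉ A then cycleW σ (σ.symm p) b else 0))]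
  rw [step3, Fintype.sum_prod_type]
  refine Finset.sum_congr rfl ?_
  intro i _
  refine Finset.sum_congr rfl ?_
  intro x _
  rw [Fintype.sum_prod_type]
  have inner : ∀ j : Fin m, ∑ y : ZMod 5,
      (if σ.symm (i, x) ∈ A ∧ σ.symm (j, y) ∉ A then cycleW σ (σ.symm (i, x)) (σ.symm (j, y)) else 0)
      = if j = i then ∑ y : ZMod 5,
          (if σ.symm (i, x) ∈ A ∧ σ.symm (i, y) ∉ A ∧ (x = y + 1 ∨ y = x + 1)
            then (1 : ℝ) else 0) else 0 := by
    intro j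
    by_cases hj : j = i
    · subst hj
      rw [if_pos rfl]
      refine Finset.sum_congr rfl ?_
      intro y _
      by_cases h1 : σ.symm (j, x) ∈ A <;> by_cases h2 : σ.symm (j, y) ∉ A <;>
        by_cases h3 : (x = y + 1 ∨ y = x + 1) <;>
        simp [h1, h2, h3, cycleW, Equiv.apply_symm_apply]
    · rw [if_neg hj]
      refine Finset.sum_eq_zero ?_
      intro y _
      have : cycleW σ (σ.symm (i, x)) (σ.symm (j, y)) = 0 := by
        unfold cycleW
        rw [if_neg]
        simp only [Equiv.apply_symm_apply]
        intro hc
        exact hj (hc.1.symm)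
      rw [this]
      simp
  rw [Finset.sum_congr rfl (fun j _ => inner j)]
  rw [Finset.sum_ite_eq' univ i]
  simp

lemma cut_ge_splits (σ : V ≃ Fin m × ZMod 5) (A : Finset V) :
    2 * ((splitsF σ A).card : ℝ) ≤ cutW (cycleW σ) A Aᶜ := by
  rw [cut_as_sum]
  have inner_nonneg : ∀ i : Fin m, (0:ℝ) ≤ ∑ x : ZMod 5, ∑ y : ZMod 5,
      (if σ.symm (i, x) ∈ A ∧ σ.symm (i, y) ∉ A ∧ (x = y + 1 ∨ y = x + 1)
        then (1 : ℝ) else 0) := by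
    intro i
    refine Finset.sum_nonneg fun x _ => Finset.sum_nonneg fun y _ => ?_
    split_ifs <;> norm_num
  have per_i : ∀ i ∈ splitsF σ A, (2:ℝ) ≤ ∑ x : ZMod 5, ∑ y : ZMod 5,
      (if σ.symm (i, x) ∈ A ∧ σ.symm (i, y) ∉ A ∧ (x = y + 1 ∨ y = x + 1)
        then (1 : ℝ) else 0) := by
    intro i hi
    simp only [splitsF, Finset.mem_filter, Finset.mem_univ, true_and] at hi
    obtain ⟨⟨x0, hx0⟩, ⟨x1, hx1⟩⟩ := hi
    set s : Finset (ZMod 5) := univ.filter (fun x => σ.symm (i, x) ∈ A) with hs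
    have hs1 : s ≠ ∅ := by
      intro h
      have : x0 ∈ s := by simp [hs, hx0]
      rw [h] at this
      simp at this
    have hs2 : s ≠ univ := by
      intro h
      have : x1 ∈ s := by rw [h]; simp
      simp [hs] at this
      exact hx1 this
    have hnat := zmod5_cross s hs1 hs2
    have hcast : ((∑ x : ZMod 5, ∑ y : ZMod 5,
        (if x ∈ s ∧ y ∉ s ∧ (x = y + 1 ∨ y = x + 1) then 1 else 0) : ℕ) : ℝ)
        = ∑ x : ZMod 5, ∑ y : ZMod 5,
          (if σ.symm (i, x) ∈ A ∧ σ.symm (i, y) ∉ A ∧ (x = y + 1 ∨ y = x + 1)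
            then (1 : ℝ) else 0) := by
      push_cast
      refine Finset.sum_congr rfl fun x _ => Finset.sum_congr rfl fun y _ => ?_
      have hiff : (x ∈ s ∧ y ∉ s ∧ (x = y + 1 ∨ y = x + 1))
          ↔ (σ.symm (i, x) ∈ A ∧ σ.symm (i, y) ∉ A ∧ (x = y + 1 ∨ y = x + 1)) := by
        simp [hs]
      rw [if_congr hiff rfl rfl]
    calc (2:ℝ) ≤ ((∑ x : ZMod 5, ∑ y : ZMod 5,
        (if x ∈ s ∧ y ∉ s ∧ (x = y + 1 ∨ y = x + 1) then 1 else 0) : ℕ) : ℝ) := by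
          exact_mod_cast hnat
      _ = _ := hcast
  calc 2 * ((splitsF σ A).card : ℝ)
      = ∑ _i ∈ splitsF σ A, (2:ℝ) := by rw [Finset.sum_const, nsmul_eq_mul, mul_comm]
    _ ≤ ∑ i ∈ splitsF σ A, ∑ x : ZMod 5, ∑ y : ZMod 5,
        (if σ.symm (i, x) ∈ A ∧ σ.symm (i, y) ∉ A ∧ (x = y + 1 ∨ y = x + 1)
          then (1 : ℝ) else 0) := Finset.sum_le_sum per_i
    _ ≤ ∑ i : Fin m, ∑ x : ZMod 5, ∑ y : ZMod 5,
        (if σ.symm (i, x) ∈ A ∧ σ.symm (i, y) ∉ A ∧ (x = y + 1 ∨ y = x + 1)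
          then (1 : ℝ) else 0) := by
        refine Finset.sum_le_sum_of_subset_of_nonneg (Finset.subset_univ _) ?_
        intro i _ _
        exact inner_nonneg i

/-- A union of blocks has zero cut. -/
lemma cut_pure_zero (σ : V ≃ Fin m × ZMod 5) (S : Finset (Fin m)) :
    cutW (cycleW σ) ((S ×ˢ univ).image σ.symm) ((S ×ˢ univ).image σ.symm)ᶜ = 0 := by
  set A := (S ×ˢ univ).image σ.symm with hA
  have hmem : ∀ v : V, v ∈ A ↔ (σ v).1 ∈ S := by
    intro v
    rw [hA, Finset.mem_image]
    constructor
    · rintro ⟨p, hp, rfl⟩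
      simp only [Finset.mem_product] at hp
      simpa using hp.1
    · intro h
      exact ⟨σ v, by simp [Finset.mem_product, h], by simp⟩
  unfold cutW
  refine Finset.sum_eq_zero fun a ha => Finset.sum_eq_zero fun b hb => ?_
  unfold cycleW
  rw [if_neg]
  intro hc
  have h1 : (σ a).1 ∈ S := (hmem a).mp ha
  rw [Finset.mem_compl] at hb
  have h2 : (σ b).1 ∉ S := fun h => hb ((hmem b).mpr h)
  exact h2 (hc.1 ▸ h1)

end HCPack
namespace HCPack
open Finset

variable {V : Type} [Fintype V] [DecidableEq V] {m : ℕ}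

/-- Two cycle packings are `Bad` (for parameter `n`) if some balanced set splits few blocks
of both. -/
def Bad (n : ℕ) (σ τ : V ≃ Fin m × ZMod 5) : Prop :=
  ∃ A : Finset V, (n ≤ 3 * A.card ∧ 3 * A.card ≤ 2 * n) ∧
    (splitsF σ A).card ≤ n / 500 ∧ (splitsF τ A).card ≤ n / 500

lemma bad_symm {n : ℕ} {σ τ : V ≃ Fin m × ZMod 5} (h : Bad n σ τ) : Bad n τ σ := by
  obtain ⟨A, h1, h2, h3⟩ := h
  exact ⟨A, h1, h3, h2⟩

/-- If the weight functions agree (in particular if `σ = τ`), the pair is `Bad`. -/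
lemma bad_of_weight_eq {n : ℕ} (hm : 3 ≤ m) (hn : n = 5 * m) (σ τ : V ≃ Fin m × ZMod 5)
    (hw : cycleW σ = cycleW τ) : Bad n σ τ := by
  obtain ⟨S, -, hScard⟩ := Finset.exists_subset_card_eq
    (show (m + 1) / 2 ≤ (univ : Finset (Fin m)).card by simp [Fintype.card_fin]; omega)
  set A : Finset V := (S ×ˢ univ).image σ.symm with hA
  have hAcard : A.card = (m + 1) / 2 * 5 := by
    rw [hA, Finset.card_image_of_injective _ σ.symm.injective, Finset.card_product,
      hScard]
    have : (univ : Finset (ZMod 5)).card = 5 := rfl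
    rw [this]
  have hsplit : ∀ ρ : V ≃ Fin m × ZMod 5, cutW (cycleW ρ) A Aᶜ = 0 →
      (splitsF ρ A).card = 0 := by
    intro ρ hcut
    have h2 := cut_ge_splits ρ A
    rw [hcut] at h2
    have : ((splitsF ρ A).card : ℝ) ≤ 0 := by linarith
    exact_mod_cast le_antisymm (by exact_mod_cast this) (Nat.zero_le _)
  have c1 : (splitsF σ A).card = 0 := hsplit σ (by rw [hA]; exact cut_pure_zero σ S)
  have c2 : (splitsF τ A).card = 0 := hsplit τ (by rw [← hw, hA]; exact cut_pure_zero σ S)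
  refine ⟨A, ⟨?_, ?_⟩, by omega, by omega⟩ <;> rw [hAcard] <;> omega

lemma bad_refl {n : ℕ} (hm : 3 ≤ m) (hn : n = 5 * m) (σ : V ≃ Fin m × ZMod 5) :
    Bad n σ σ := bad_of_weight_eq hm hn σ σ rfl

/-- A tree that is simultaneously cheap for two cycle packings witnesses `Bad`. -/
lemma bad_of_good_tree {n : ℕ} (hn : 1000 ≤ n) (hcV : Fintype.card V = n)
    (σ τ : V ≃ Fin m × ZMod 5) (T : BTree V) (hT : IsHC T)
    (hσ : cost (cycleW σ) T < (n : ℝ) ^ 2 / 400)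
    (hτ : cost (cycleW τ) T < (n : ℝ) ^ 2 / 400) : Bad n σ τ := by
  obtain ⟨hnd, hleaves⟩ := hT
  have hcard : T.leaves.card = n := by rw [hleaves, Finset.card_univ, hcV]
  obtain ⟨A, -, hA1, hA2, hA3⟩ := BTree.exists_balanced n (by omega) T hnd (by omega)
  have hcl : ∀ u ∈ A, ∀ v, v ∉ A → 2 * n ≤ 3 * (T.cluster u v).card := by
    intro u hu v hv
    exact hA3 u hu v (by rw [hleaves]; exact Finset.mem_univ v) hv
  have key : ∀ ρ : V ≃ Fin m × ZMod 5, cost (cycleW ρ) T < (n : ℝ) ^ 2 / 400 →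
      (splitsF ρ A).card ≤ n / 500 := by
    intro ρ hρ
    have hc1 := cost_ge_cut (cycleW ρ) (cycleW_nonneg ρ) (cycleW_symm ρ) T n A hcl
    have hc2 := cut_ge_splits ρ A
    set s : ℕ := (splitsF ρ A).card
    have hn0 : (0:ℝ) < n := by positivity
    have hstep : ((2 * n : ℝ) / 3) * (2 * s) ≤ cost (cycleW ρ) T := by
      refine le_trans ?_ hc1
      refine mul_le_mul_of_nonneg_left hc2 ?_
      positivity
    have hreal : (n : ℝ) * (1600 * s) < (n : ℝ) * (3 * n) := by nlinarith
    have hlt : (1600 * s : ℝ) < 3 * n := (mul_lt_mul_iff_right₀ hn0).mp hreal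
    have hnat : 1600 * s < 3 * n := by exact_mod_cast hlt
    omega
  exact ⟨A, ⟨hA1, hA2⟩, key σ hσ, key τ hτ⟩

end HCPack
namespace HCPack
open Finset

variable {V : Type} [Fintype V] [DecidableEq V] {m : ℕ}

/-- Greedy packing: if every element is `R`-related to at most `B₀` elements (including
itself), there is an `R`-independent set of size at least `card α / B₀`. -/
lemma greedy {α : Type} [DecidableEq α] [Fintype α] (R : α → α → Prop)
    [∀ x, DecidablePred (R x)] (hsym : ∀ x y, R x y → R y x) (hrefl : ∀ x, R x x)
    (B₀ : ℕ) (hB : ∀ x, ((univ : Finset α).filter (R x)).card ≤ B₀) :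
    ∃ S : Finset α, (∀ x ∈ S, ∀ y ∈ S, x ≠ y → ¬R x y) ∧
      Fintype.card α ≤ B₀ * S.card := by
  suffices h : ∀ k (U : Finset α), U.card ≤ k → ∃ S : Finset α, S ⊆ U ∧
      (∀ x ∈ S, ∀ y ∈ S, x ≠ y → ¬R x y) ∧ U.card ≤ B₀ * S.card by
    obtain ⟨S, _, h2, h3⟩ := h (Fintype.card α) univ (by rw [Finset.card_univ])
    exact ⟨S, h2, by rwa [Finset.card_univ] at h3⟩
  intro k
  induction k with
  | zero =>
      intro U hU
      exact ⟨∅, Finset.empty_subset _, by simp, by omega⟩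
  | succ k ih =>
      intro U hU
      rcases U.eq_empty_or_nonempty with rfl | ⟨x, hx⟩
      · exact ⟨∅, Finset.empty_subset _, by simp, by simp⟩
      · set F := (univ : Finset α).filter (R x) with hF
        set U' := U \ F with hU'
        have hxF : x ∈ F := by simp [hF, hrefl x]
        have hxU' : x ∉ U' := by simp [hU', hxF]
        have hU'sub : U' ⊆ U := Finset.sdiff_subset
        have hcard : U'.card < U.card :=
          Finset.card_lt_card ⟨hU'sub, fun hsub => hxU' (hsub hx)⟩
        obtain ⟨S, hSsub, hSpair, hScard⟩ := ih U' (by omega)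
        rw [hU'] at hScard
        have hxS : x ∉ S := fun h => hxU' (hSsub h)
        refine ⟨insert x S, ?_, ?_, ?_⟩
        · intro a ha
          rcases Finset.mem_insert.mp ha with rfl | ha'
          · exact hx
          · exact hU'sub (hSsub ha')
        · intro a ha b hb hab
          rcases Finset.mem_insert.mp ha with rfl | ha' <;>
            rcases Finset.mem_insert.mp hb with rfl | hb'
          · exact absurd rfl hab
          · intro hR
            have hmem : b ∈ U' := hSsub hb'
            rw [hU', Finset.mem_sdiff] at hmem
            exact hmem.2 (by simp [hF, hR])
          · intro hR
            have hmem : a ∈ U' := hSsub ha'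
            rw [hU', Finset.mem_sdiff] at hmem
            exact hmem.2 (by simp [hF, hsym _ _ hR])
          · exact hSpair a ha' b hb' hab
        · rw [Finset.card_insert_of_notMem hxS, Nat.mul_succ]
          have h1 : (U \ F).card + (U ∩ F).card = U.card :=
            Finset.card_sdiff_add_card_inter U F
          have h2 : (U ∩ F).card ≤ B₀ :=
            le_trans (Finset.card_le_card Finset.inter_subset_right) (hB x)
          omega

lemma card_finset_zmod5 : (univ : Finset (Finset (ZMod 5))).card = 32 := by
  rw [Finset.card_univ, Fintype.card_finset]
  rfl

lemma card_pair_zmod5 : ({∅, univ} : Finset (Finset (ZMod 5))).card = 2 := by decide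

/-- Bound on the number of sets splitting at most `K` blocks of `σ`. -/
lemma count_badA (σ : V ≃ Fin m × ZMod 5) (K : ℕ) (hK : K ≤ m) :
    (((univ : Finset (Finset V))).filter (fun A => (splitsF σ A).card ≤ K)).card
      ≤ m.choose K * (32 ^ K * 2 ^ (m - K)) := by
  classical
  set target : Finset (Fin m → Finset (ZMod 5)) :=
    (Finset.powersetCard K (univ : Finset (Fin m))).biUnion
      (fun P => Fintype.piFinset (fun i => if i ∈ P then (univ : Finset (Finset (ZMod 5)))
        else ({∅, univ} : Finset (Finset (ZMod 5))))) with htarget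
  have hmaps : ∀ A ∈ ((univ : Finset (Finset V))).filter (fun A => (splitsF σ A).card ≤ K),
      (fun (A : Finset V) (i : Fin m) =>
        (univ : Finset (ZMod 5)).filter (fun x => σ.symm (i, x) ∈ A)) A ∈ target := by
    intro A hA
    rw [Finset.mem_filter] at hA
    obtain ⟨P, hPsub, hPcard⟩ := Finset.exists_superset_card_eq hA.2
      (by rw [Fintype.card_fin]; exact hK)
    rw [htarget, Finset.mem_biUnion]
    refine ⟨P, by rw [Finset.mem_powersetCard]; exact ⟨Finset.subset_univ P, hPcard⟩, ?_⟩
    rw [Fintype.mem_piFinset]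
    intro i
    by_cases hiP : i ∈ P
    · simp [hiP]
    · have hiS : i ∉ splitsF σ A := fun h => hiP (hPsub h)
      simp only [splitsF, Finset.mem_filter, Finset.mem_univ, true_and, not_and,
        not_exists, not_not] at hiS
      rw [if_neg hiP]
      simp only [Finset.mem_insert, Finset.mem_singleton]
      by_cases hex : ∃ x, σ.symm (i, x) ∈ A
      · right
        obtain ⟨x0, hx0⟩ := hex
        ext x
        simp only [Finset.mem_filter, Finset.mem_univ, true_and]
        exact ⟨fun _ => trivial, fun _ => hiS ⟨x0, hx0⟩ x⟩
      · left
        push_neg at hex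
        ext x
        simp [hex x]
  have hinj : Set.InjOn (fun (A : Finset V) (i : Fin m) =>
      (univ : Finset (ZMod 5)).filter (fun x => σ.symm (i, x) ∈ A))
      ((((univ : Finset (Finset V))).filter (fun A => (splitsF σ A).card ≤ K)) : Set (Finset V)) := by
    intro A _ B _ hAB
    ext v
    have h1 : ((univ : Finset (ZMod 5)).filter (fun x => σ.symm ((σ v).1, x) ∈ A))
        = ((univ : Finset (ZMod 5)).filter (fun x => σ.symm ((σ v).1, x) ∈ B)) :=
      congrFun hAB (σ v).1
    simp only [Finset.ext_iff, Finset.mem_filter, Finset.mem_univ, true_and] at h1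
    have h3 := h1 (σ v).2
    simpa using h3
  calc (((univ : Finset (Finset V))).filter (fun A => (splitsF σ A).card ≤ K)).card
      ≤ target.card := Finset.card_le_card_of_injOn _ hmaps hinj
    _ ≤ ∑ P ∈ Finset.powersetCard K (univ : Finset (Fin m)),
          (Fintype.piFinset (fun i => if i ∈ P then (univ : Finset (Finset (ZMod 5)))
            else ({∅, univ} : Finset (Finset (ZMod 5))))).card := Finset.card_biUnion_le
    _ ≤ m.choose K * (32 ^ K * 2 ^ (m - K)) := by
        refine le_trans (Finset.sum_le_card_nsmul _ _ (32 ^ K * 2 ^ (m - K)) ?_) ?_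
        · intro P hP
          rw [Finset.mem_powersetCard] at hP
          rw [Fintype.card_piFinset]
          have : ∀ i : Fin m, ((if i ∈ P then (univ : Finset (Finset (ZMod 5)))
              else ({∅, univ} : Finset (Finset (ZMod 5)))).card)
              = if i ∈ P then 32 else 2 := by
            intro i
            by_cases h : i ∈ P <;> simp [h, card_finset_zmod5, card_pair_zmod5]
          rw [Finset.prod_congr rfl (fun i _ => this i)]
          rw [← Finset.prod_filter_mul_prod_filter_not univ (· ∈ P)]
          have e1 : Finset.filter (· ∈ P) univ = P := by ext i; simp
          have e2 : (Finset.filter (fun i => ¬ i ∈ P) univ).card = m - K := by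
            have : Finset.filter (fun i => ¬ i ∈ P) univ = Pᶜ := by ext i; simp
            rw [this, Finset.card_compl, Fintype.card_fin, hP.2]
          rw [Finset.prod_congr e1 (fun i hi => if_pos hi),
            Finset.prod_congr rfl (fun i hi => if_neg (by simpa using (Finset.mem_filter.mp hi).2)),
            Finset.prod_const, Finset.prod_const, e2, hP.2]
        · rw [Finset.card_powersetCard, Finset.card_univ, Fintype.card_fin, smul_eq_mul]

end HCPack
namespace HCPack
open Finset

variable {V : Type} [Fintype V] [DecidableEq V] {m : ℕ}

lemma mem_image_equiv (τ : V ≃ Fin m × ZMod 5) (A : Finset V) (p : Fin m × ZMod 5) :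
    p ∈ A.image ⇑τ ↔ τ.symm p ∈ A := by
  rw [Finset.mem_image]
  constructor
  · rintro ⟨a, ha, rfl⟩
    rwa [Equiv.symm_apply_apply]
  · intro h
    exact ⟨τ.symm p, h, Equiv.apply_symm_apply τ p⟩

lemma count_imageEq (hcV : Fintype.card V = 5 * m) (A : Finset V)
    (B : Finset (Fin m × ZMod 5)) :
    (((univ : Finset (V ≃ Fin m × ZMod 5))).filter (fun τ : V ≃ Fin m × ZMod 5 => A.image ⇑τ = B)).card
      ≤ Nat.factorial A.card * Nat.factorial (Fintype.card V - A.card) := by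
  classical
  rcases (((univ : Finset (V ≃ Fin m × ZMod 5))).filter
      (fun τ : V ≃ Fin m × ZMod 5 => A.image ⇑τ = B)).eq_empty_or_nonempty with he | ⟨τ₀, hτ₀⟩
  · rw [he, Finset.card_empty]; exact Nat.zero_le _
  rw [Finset.mem_filter] at hτ₀
  have hτ₀B : A.image ⇑τ₀ = B := hτ₀.2
  have hBcard : B.card = A.card := by
    rw [← hτ₀B, Finset.card_image_of_injective _ τ₀.injective]
  have hmem1 : ∀ (τ : V ≃ Fin m × ZMod 5), A.image ⇑τ = B → ∀ x : {x // x ∈ A},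
      τ x.1 ∈ B := by
    intro τ h x
    rw [← h]
    exact Finset.mem_image_of_mem _ x.2
  have hmem2 : ∀ (τ : V ≃ Fin m × ZMod 5), A.image ⇑τ = B → ∀ x : {x // x ∈ Aᶜ},
      τ x.1 ∈ Bᶜ := by
    intro τ h x
    rw [Finset.mem_compl, ← h, mem_image_equiv, Equiv.symm_apply_apply]
    have := x.2
    rw [Finset.mem_compl] at this
    exact this
  let mke : ∀ (τ : V ≃ Fin m × ZMod 5), A.image ⇑τ = B →
      ({x // x ∈ A} ↪ {y // y ∈ B}) × ({x // x ∈ Aᶜ} ↪ {y // y ∈ Bᶜ}) := fun τ h =>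
    (⟨fun x => ⟨τ x.1, hmem1 τ h x⟩, fun a b hab => by
        apply Subtype.ext
        exact τ.injective (congrArg Subtype.val hab)⟩,
     ⟨fun x => ⟨τ x.1, hmem2 τ h x⟩, fun a b hab => by
        apply Subtype.ext
        exact τ.injective (congrArg Subtype.val hab)⟩)
  let F : (V ≃ Fin m × ZMod 5) →
      ({x // x ∈ A} ↪ {y // y ∈ B}) × ({x // x ∈ Aᶜ} ↪ {y // y ∈ Bᶜ}) := fun τ =>
    if h : A.image ⇑τ = B then mke τ h else mke τ₀ hτ₀B
  have hcard : (((univ : Finset (V ≃ Fin m × ZMod 5))).filter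
        (fun τ : V ≃ Fin m × ZMod 5 => A.image ⇑τ = B)).card
      ≤ (univ : Finset (({x // x ∈ A} ↪ {y // y ∈ B}) ×
          ({x // x ∈ Aᶜ} ↪ {y // y ∈ Bᶜ}))).card := Finset.card_le_card_of_injOn F
    (fun τ _ => Finset.mem_univ (F τ))
    (by
      intro τ hτ τ' hτ' hFF
      have h : A.image ⇑τ = B := (Finset.mem_filter.mp (Finset.mem_coe.mp hτ)).2
      have h' : A.image ⇑τ' = B := (Finset.mem_filter.mp (Finset.mem_coe.mp hτ')).2
      simp only [F, dif_pos h, dif_pos h'] at hFF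
      have h1 := congrArg Prod.fst hFF
      have h2 := congrArg Prod.snd hFF
      apply Equiv.coe_fn_injective
      funext v
      by_cases hv : v ∈ A
      · have := DFunLike.congr_fun h1 ⟨v, hv⟩
        exact congrArg Subtype.val this
      · have hv' : v ∈ Aᶜ := Finset.mem_compl.mpr hv
        have := DFunLike.congr_fun h2 ⟨v, hv'⟩
        exact congrArg Subtype.val this)
  refine le_trans hcard ?_
  rw [Finset.card_univ, Fintype.card_prod, Fintype.card_embedding_eq,
    Fintype.card_embedding_eq, Fintype.card_coe, Fintype.card_coe,
    Fintype.card_coe, Fintype.card_coe, Finset.card_compl, Finset.card_compl,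
    hBcard, Nat.descFactorial_self]
  have hprod : Fintype.card (Fin m × ZMod 5) = 5 * m := by
    rw [Fintype.card_prod, Fintype.card_fin, ZMod.card]
    ring
  rw [hprod, ← hcV, Nat.descFactorial_self]

lemma count_badTau (hcV : Fintype.card V = 5 * m) (A : Finset V) (K : ℕ) (hK : K ≤ m) :
    (((univ : Finset (V ≃ Fin m × ZMod 5))).filter
        (fun τ => (splitsF τ A).card ≤ K)).card
      ≤ m.choose K * (2 ^ (m - K) * 2 ^ (5 * K) *
          (Nat.factorial A.card * Nat.factorial (Fintype.card V - A.card))) := by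
  classical
  set 𝓑 : Finset (Fin m) → Finset (Finset (Fin m × ZMod 5)) := fun P =>
    ((Pᶜ.powerset) ×ˢ (P ×ˢ (univ : Finset (ZMod 5))).powerset).image
      (fun UM => UM.1 ×ˢ (univ : Finset (ZMod 5)) ∪ UM.2) with h𝓑
  have hsub : (((univ : Finset (V ≃ Fin m × ZMod 5))).filter
      (fun τ => (splitsF τ A).card ≤ K))
      ⊆ (Finset.powersetCard K (univ : Finset (Fin m))).biUnion
          (fun P => (𝓑 P).biUnion
            (fun B => ((univ : Finset (V ≃ Fin m × ZMod 5))).filter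
              (fun τ => A.image ⇑τ = B))) := by
    intro τ hτ
    rw [Finset.mem_filter] at hτ
    obtain ⟨P, hPsub, hPcard⟩ := Finset.exists_superset_card_eq hτ.2
      (by rw [Fintype.card_fin]; exact hK)
    rw [Finset.mem_biUnion]
    refine ⟨P, by rw [Finset.mem_powersetCard]; exact ⟨Finset.subset_univ P, hPcard⟩, ?_⟩
    rw [Finset.mem_biUnion]
    refine ⟨A.image ⇑τ, ?_, by simp⟩
    rw [h𝓑, Finset.mem_image]
    refine ⟨(Pᶜ.filter (fun i => τ.symm (i, (0 : ZMod 5)) ∈ A),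
      (A.image ⇑τ) ∩ (P ×ˢ (univ : Finset (ZMod 5)))), ?_, ?_⟩
    · rw [Finset.mem_product]
      constructor
      · rw [Finset.mem_powerset]; exact Finset.filter_subset _ _
      · rw [Finset.mem_powerset]; exact Finset.inter_subset_right
    · ext p
      obtain ⟨i, x⟩ := p
      rw [Finset.mem_union, Finset.mem_product, mem_image_equiv]
      by_cases hiP : i ∈ P
      · simp only [Finset.mem_filter, Finset.mem_compl, hiP, not_true_eq_false,
          false_and, Finset.mem_inter, Finset.mem_product, Finset.mem_univ, and_true,
          mem_image_equiv]
        tauto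
      · have hpure : ¬((∃ y, τ.symm (i, y) ∈ A) ∧ (∃ y, τ.symm (i, y) ∉ A)) := by
          intro hc
          have : i ∈ splitsF τ A := by
            rw [splitsF, Finset.mem_filter]
            exact ⟨Finset.mem_univ i, hc⟩
          exact hiP (hPsub this)
        have hiff : τ.symm (i, x) ∈ A ↔ τ.symm (i, (0 : ZMod 5)) ∈ A := by
          constructor
          · intro h
            by_contra h0
            exact hpure ⟨⟨x, h⟩, ⟨0, h0⟩⟩
          · intro h
            by_contra h0
            exact hpure ⟨⟨0, h⟩, ⟨x, h0⟩⟩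
        simp only [Finset.mem_filter, Finset.mem_compl, hiP, not_false_eq_true,
          true_and, Finset.mem_univ, and_true, Finset.mem_inter, Finset.mem_product,
          mem_image_equiv]
        tauto
  refine le_trans (Finset.card_le_card hsub) ?_
  refine le_trans Finset.card_biUnion_le ?_
  refine le_trans (Finset.sum_le_card_nsmul _ _
    (2 ^ (m - K) * 2 ^ (5 * K) * (Nat.factorial A.card * Nat.factorial (Fintype.card V - A.card))) ?_) ?_
  · intro P hP
    rw [Finset.mem_powersetCard] at hP
    refine le_trans Finset.card_biUnion_le ?_
    refine le_trans (Finset.sum_le_card_nsmul _ _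
      (Nat.factorial A.card * Nat.factorial (Fintype.card V - A.card))
      (fun B _ => count_imageEq hcV A B)) ?_
    rw [smul_eq_mul]
    refine Nat.mul_le_mul_right _ ?_
    refine le_trans (Finset.card_image_le) ?_
    rw [Finset.card_product, Finset.card_powerset, Finset.card_powerset,
      Finset.card_compl, Fintype.card_fin, hP.2, Finset.card_product]
    have h5 : ((univ : Finset (ZMod 5))).card = 5 := rfl
    rw [h5, hP.2, Nat.mul_comm K 5]
  · rw [smul_eq_mul, Finset.card_powersetCard, Finset.card_univ, Fintype.card_fin]
end HCPack
namespace HCPack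
open Finset

variable {V : Type} [Fintype V] [DecidableEq V] {m : ℕ}

lemma choose_ratio (n a : ℕ) (h3 : n ≤ 3 * a) :
    ∀ d, n.choose (a + d) ≤ 2 ^ d * n.choose a := by
  intro d
  induction d with
  | zero => simp
  | succ d ih =>
      have hid := Nat.choose_succ_right_eq n (a + d)
      have h1 : n - (a + d) ≤ 2 * (a + d + 1) := by omega
      have h2 : n.choose (a + d + 1) * (a + d + 1) ≤ (2 * n.choose (a + d)) * (a + d + 1) := by
        rw [hid]
        calc n.choose (a + d) * (n - (a + d))
            ≤ n.choose (a + d) * (2 * (a + d + 1)) := Nat.mul_le_mul_left _ h1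
          _ = (2 * n.choose (a + d)) * (a + d + 1) := by ring
      have h3' : n.choose (a + d + 1) ≤ 2 * n.choose (a + d) :=
        Nat.le_of_mul_le_mul_right h2 (by omega)
      calc n.choose (a + (d + 1)) = n.choose ((a + d) + 1) := by rw [Nat.add_succ]
        _ ≤ 2 * n.choose (a + d) := h3'
        _ ≤ 2 * (2 ^ d * n.choose a) := Nat.mul_le_mul_left _ ih
        _ = 2 ^ (d + 1) * n.choose a := by ring

lemma middle_choose (n : ℕ) : 2 ^ n ≤ (n + 1) * n.choose (n / 2) := by
  have h := Nat.sum_range_choose n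
  have hsum := Finset.sum_le_card_nsmul (Finset.range (n + 1)) (fun i => n.choose i)
    (n.choose (n / 2)) (fun i _ => Nat.choose_le_middle i n)
  rw [Finset.card_range, smul_eq_mul] at hsum
  calc 2 ^ n = ∑ i ∈ Finset.range (n + 1), n.choose i := h.symm
    _ ≤ (n + 1) * n.choose (n / 2) := hsum

lemma choose_balanced (n a : ℕ) (h1 : n ≤ 3 * a) (h2 : 3 * a ≤ 2 * n) :
    2 ^ n ≤ (n + 1) * (2 ^ (n / 6) * n.choose a) := by
  set a' := min a (n - a) with ha'
  have ha'3 : n ≤ 3 * a' := by omega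
  have ha'le : 2 * a' ≤ n := by omega
  have hsym : n.choose a' = n.choose a := by
    rcases le_or_gt a (n - a) with h | h
    · have : a' = a := by omega
      rw [this]
    · have : a' = n - a := by omega
      rw [this, Nat.choose_symm (by omega : a ≤ n)]
  set d := n / 2 - a' with hd'
  have hd : a' + d = n / 2 := by omega
  have hc := choose_ratio n a' ha'3 d
  rw [hd] at hc
  have hd6 : d ≤ n / 6 := by omega
  calc 2 ^ n ≤ (n + 1) * n.choose (n / 2) := middle_choose n
    _ ≤ (n + 1) * (2 ^ d * n.choose a') := Nat.mul_le_mul_left _ hc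
    _ ≤ (n + 1) * (2 ^ (n / 6) * n.choose a) := by
        rw [hsym]
        exact Nat.mul_le_mul_left _ (Nat.mul_le_mul_right _
          (Nat.pow_le_pow_right (by norm_num) hd6))

lemma choose_small (M K : ℕ) (hK : K ≤ M) :
    M.choose K * 1024 ^ (M - K) ≤ 1025 ^ M := by
  have h : (1025 : ℕ) ^ M = ∑ j ∈ Finset.range (M + 1),
      1024 ^ j * 1 ^ (M - j) * (M.choose j) := by
    have := add_pow (1024 : ℕ) 1 M
    norm_num at this ⊢
    rw [this]
  rw [h]
  have hmem : M - K ∈ Finset.range (M + 1) := by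
    rw [Finset.mem_range]; omega
  have := Finset.single_le_sum
    (f := fun j => 1024 ^ j * 1 ^ (M - j) * (M.choose j))
    (fun j _ => Nat.zero_le _) hmem
  calc M.choose K * 1024 ^ (M - K)
      = 1024 ^ (M - K) * 1 ^ (M - (M - K)) * (M.choose (M - K)) := by
        rw [Nat.choose_symm hK, one_pow]; ring
    _ ≤ _ := this

lemma pow1025 (M : ℕ) : 1025 ^ M ≤ 2 ^ (10 * M + M / 256 + 256) := by
  have base : (1025 : ℕ) ^ 256 ≤ 2 ^ 2561 := by
    rw [show (2561 : ℕ) = 197 * 13 by norm_num, pow_mul]; norm_num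
  have hqr : 256 * (M / 256) + M % 256 = M := Nat.div_add_mod M 256
  calc (1025 : ℕ) ^ M = (1025 ^ 256) ^ (M / 256) * 1025 ^ (M % 256) := by
        rw [← pow_mul, ← pow_add, hqr]
    _ ≤ (2 ^ 2561) ^ (M / 256) * (2 ^ 11) ^ (M % 256) :=
        Nat.mul_le_mul (Nat.pow_le_pow_left base _)
          (Nat.pow_le_pow_left (by norm_num) _)
    _ = 2 ^ (2561 * (M / 256) + 11 * (M % 256)) := by
        rw [← pow_mul, ← pow_mul, ← pow_add]
    _ ≤ 2 ^ (10 * M + M / 256 + 256) := Nat.pow_le_pow_right (by norm_num) (by omega)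

lemma linear_pow (c : ℕ) (hc : 14 ≤ c) : 100 * c + 101 ≤ 2 ^ c := by
  induction c, hc using Nat.le_induction with
  | base => norm_num
  | succ c hc ih =>
      have h100 : 100 * 1 + 101 ≤ 2 ^ c :=
        le_trans (by norm_num) (le_trans (by norm_num : (201:ℕ) ≤ 2 ^ 14)
          (Nat.pow_le_pow_right (by norm_num) hc))
      rw [pow_succ]
      omega

lemma nplus1 (n : ℕ) (hn : 1500 ≤ n) : n + 1 ≤ 2 ^ (n / 100) := by
  have h14 : 14 ≤ n / 100 := by omega
  have := linear_pow (n / 100) h14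
  omega

lemma final_numeric (n M K : ℕ) (hm : n = 5 * M) (hK : K = n / 500)
    (hn : 1000000 ≤ n) :
    (M.choose K * (32 ^ K * 2 ^ (M - K))) * ((M.choose K * (2 ^ (M - K) * 2 ^ (5 * K))) *
      ((n + 1) * 2 ^ (n / 6))) * 2 ^ M ≤ 2 ^ n := by
  have hKm : K ≤ M := by omega
  have h1 : M.choose K * 2 ^ (10 * (M - K)) ≤ 2 ^ (10 * M + M / 256 + 256) := by
    calc M.choose K * 2 ^ (10 * (M - K)) = M.choose K * 1024 ^ (M - K) := by
          rw [pow_mul]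
          norm_num
      _ ≤ 1025 ^ M := choose_small M K hKm
      _ ≤ _ := pow1025 M
  have hnp : n + 1 ≤ 2 ^ (n / 100) := nplus1 n (by omega)
  refine Nat.le_of_mul_le_mul_right ?_
    (show 0 < 2 ^ (20 * (M - K)) from Nat.pow_pos (by norm_num))
  have h32 : (32 : ℕ) ^ K = 2 ^ (5 * K) := by
    rw [pow_mul]
    norm_num
  calc (M.choose K * (32 ^ K * 2 ^ (M - K))) * ((M.choose K * (2 ^ (M - K) * 2 ^ (5 * K))) *
        ((n + 1) * 2 ^ (n / 6))) * 2 ^ M * 2 ^ (20 * (M - K))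
      = (M.choose K * 2 ^ (10 * (M - K))) * ((M.choose K * 2 ^ (10 * (M - K))) *
          ((n + 1) * (32 ^ K * 2 ^ (M - K) * 2 ^ (M - K) * 2 ^ (5 * K) * 2 ^ (n / 6) * 2 ^ M))) := by
        ring
    _ ≤ (2 ^ (10 * M + M / 256 + 256)) * ((2 ^ (10 * M + M / 256 + 256)) *
          ((2 ^ (n / 100)) * (32 ^ K * 2 ^ (M - K) * 2 ^ (M - K) * 2 ^ (5 * K) * 2 ^ (n / 6) * 2 ^ M))) := by
        exact Nat.mul_le_mul h1 (Nat.mul_le_mul h1 (Nat.mul_le_mul hnp (le_refl _)))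
    _ = 2 ^ ((10 * M + M / 256 + 256) + ((10 * M + M / 256 + 256) +
          ((n / 100) + (5 * K + (M - K) + (M - K) + 5 * K + n / 6 + M)))) := by
        rw [h32]
        simp only [← pow_add]
    _ ≤ 2 ^ (n + 20 * (M - K)) := Nat.pow_le_pow_right (by norm_num) (by omega)
    _ = 2 ^ n * 2 ^ (20 * (M - K)) := pow_add 2 n _

lemma exists_family (n M : ℕ) (hm : n = 5 * M) (hn : 1000000 ≤ n)
    (V : Type) [Fintype V] [DecidableEq V] (hcV : Fintype.card V = n) :
    ∃ S : Finset (V ≃ Fin M × ZMod 5),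
      (∀ σ ∈ S, ∀ τ ∈ S, σ ≠ τ → ¬Bad n σ τ) ∧ 2 ^ M ≤ S.card := by
  classical
  set K := n / 500 with hK
  have hKm : K ≤ M := by omega
  have hm3 : 3 ≤ M := by omega
  have hcV5 : Fintype.card V = 5 * M := by rw [hcV]; omega
  set W := (M.choose K * (2 ^ (M - K) * 2 ^ (5 * K))) *
    (Nat.factorial n * ((n + 1) * 2 ^ (n / 6))) with hW
  set Z := (M.choose K * (32 ^ K * 2 ^ (M - K))) * W with hZ
  have hcount : ∀ σ : V ≃ Fin M × ZMod 5,
      ((univ : Finset (V ≃ Fin M × ZMod 5)).filter (fun τ => Bad n σ τ)).card * 2 ^ n ≤ Z := by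
    intro σ
    set badA := ((univ : Finset (Finset V))).filter
      (fun A => (n ≤ 3 * A.card ∧ 3 * A.card ≤ 2 * n) ∧ (splitsF σ A).card ≤ K) with hbadA
    have hsub : ((univ : Finset (V ≃ Fin M × ZMod 5)).filter (fun τ => Bad n σ τ)) ⊆
        badA.biUnion (fun A => (univ : Finset (V ≃ Fin M × ZMod 5)).filter
          (fun τ => (splitsF τ A).card ≤ K)) := by
      intro τ hτ
      rw [Finset.mem_filter] at hτ
      obtain ⟨A, hbal, h1, h2⟩ := hτ.2
      rw [Finset.mem_biUnion]
      refine ⟨A, ?_, ?_⟩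
      · rw [hbadA, Finset.mem_filter]
        exact ⟨Finset.mem_univ _, hbal, h1⟩
      · rw [Finset.mem_filter]
        exact ⟨Finset.mem_univ _, h2⟩
    have hper : ∀ A ∈ badA, (((univ : Finset (V ≃ Fin M × ZMod 5)).filter
        (fun τ => (splitsF τ A).card ≤ K)).card) * 2 ^ n ≤ W := by
      intro A hA
      rw [hbadA, Finset.mem_filter] at hA
      obtain ⟨-, ⟨hbal1, hbal2⟩, -⟩ := hA
      have ha_n : A.card ≤ n := by omega
      have hct := count_badTau hcV5 A K hKm
      rw [hcV] at hct
      have h2n := choose_balanced n A.card hbal1 hbal2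
      calc (((univ : Finset (V ≃ Fin M × ZMod 5)).filter
            (fun τ => (splitsF τ A).card ≤ K)).card) * 2 ^ n
          ≤ (M.choose K * (2 ^ (M - K) * 2 ^ (5 * K) *
              (Nat.factorial A.card * Nat.factorial (n - A.card)))) *
            ((n + 1) * (2 ^ (n / 6) * n.choose A.card)) := Nat.mul_le_mul hct h2n
        _ = (M.choose K * (2 ^ (M - K) * 2 ^ (5 * K))) *
            ((n.choose A.card * Nat.factorial A.card * Nat.factorial (n - A.card)) *
              ((n + 1) * 2 ^ (n / 6))) := by ring
        _ = W := by rw [Nat.choose_mul_factorial_mul_factorial ha_n, hW]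
    have hbadAcard : badA.card ≤ M.choose K * (32 ^ K * 2 ^ (M - K)) := by
      refine le_trans (Finset.card_le_card ?_) (count_badA σ K hKm)
      intro A hA
      rw [hbadA, Finset.mem_filter] at hA
      rw [Finset.mem_filter]
      exact ⟨hA.1, hA.2.2⟩
    calc ((univ : Finset (V ≃ Fin M × ZMod 5)).filter (fun τ => Bad n σ τ)).card * 2 ^ n
        ≤ (badA.biUnion (fun A => (univ : Finset (V ≃ Fin M × ZMod 5)).filter
            (fun τ => (splitsF τ A).card ≤ K))).card * 2 ^ n :=
          Nat.mul_le_mul_right _ (Finset.card_le_card hsub)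
      _ ≤ (∑ A ∈ badA, (((univ : Finset (V ≃ Fin M × ZMod 5)).filter
            (fun τ => (splitsF τ A).card ≤ K)).card)) * 2 ^ n :=
          Nat.mul_le_mul_right _ Finset.card_biUnion_le
      _ = ∑ A ∈ badA, (((univ : Finset (V ≃ Fin M × ZMod 5)).filter
            (fun τ => (splitsF τ A).card ≤ K)).card) * 2 ^ n := Finset.sum_mul _ _ _
      _ ≤ ∑ _A ∈ badA, W := Finset.sum_le_sum hper
      _ = badA.card * W := by rw [Finset.sum_const, smul_eq_mul]
      _ ≤ (M.choose K * (32 ^ K * 2 ^ (M - K))) * W := Nat.mul_le_mul_right _ hbadAcard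
      _ = Z := hZ.symm
  letI : ∀ σ : V ≃ Fin M × ZMod 5, DecidablePred (Bad n σ) := fun σ τ => Classical.dec _
  set B₀ := Z / 2 ^ n with hB₀
  have hBbound : ∀ σ : V ≃ Fin M × ZMod 5,
      ((univ : Finset (V ≃ Fin M × ZMod 5)).filter (fun τ => Bad n σ τ)).card ≤ B₀ := by
    intro σ
    rw [hB₀, Nat.le_div_iff_mul_le (Nat.pow_pos (by norm_num))]
    exact hcount σ
  obtain ⟨S, hSpair, hScard⟩ := greedy (Bad n) (fun x y h => bad_symm h)
    (fun x => bad_refl hm3 hm x) B₀ hBbound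
  refine ⟨S, hSpair, ?_⟩
  have hΩ : Fintype.card (V ≃ Fin M × ZMod 5) = Nat.factorial n := by
    have e : V ≃ Fin M × ZMod 5 := Fintype.equivOfCardEq
      (by rw [hcV, Fintype.card_prod, Fintype.card_fin, ZMod.card]; omega)
    rw [Fintype.card_equiv e, hcV]
  by_contra hlt
  push_neg at hlt
  have hZpos : 0 < Z := by
    rw [hZ, hW]
    have hcp := Nat.choose_pos hKm
    have hfp := Nat.factorial_pos n
    positivity
  have hchain : Nat.factorial n * 2 ^ n ≤ Z * S.card := by
    calc Nat.factorial n * 2 ^ n ≤ (B₀ * S.card) * 2 ^ n := by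
          rw [← hΩ]
          exact Nat.mul_le_mul_right _ hScard
      _ = (B₀ * 2 ^ n) * S.card := by ring
      _ ≤ Z * S.card := Nat.mul_le_mul_right _ (Nat.div_mul_le_self Z (2 ^ n))
  have hfin := final_numeric n M K hm hK hn
  have hZ2 : Z * 2 ^ M ≤ Nat.factorial n * 2 ^ n := by
    calc Z * 2 ^ M = Nat.factorial n * ((M.choose K * (32 ^ K * 2 ^ (M - K))) *
          ((M.choose K * (2 ^ (M - K) * 2 ^ (5 * K))) * ((n + 1) * 2 ^ (n / 6))) * 2 ^ M) := by
          rw [hZ, hW]; ring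
      _ ≤ Nat.factorial n * 2 ^ n := Nat.mul_le_mul_left _ hfin
  have hcontra : Z * S.card < Z * 2 ^ M := by
    exact mul_lt_mul_of_pos_left hlt hZpos
  omega

end HCPack
/-- For all large enough `n` divisible by 5 there is a family
`F ⊆ P(n,5)` with `|F| ≥ 2^{0.2n}` such that no binary tree with leaf set `V` has Dasgupta
cost below `n²/400` on two distinct members of `F`. -/
theorem packing_family :
    ∃ n₀ : ℕ, ∀ n : ℕ, n₀ ≤ n → 5 ∣ n →
      ∀ (V : Type) [Fintype V] [DecidableEq V], Fintype.card V = n →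
        ∃ F : Set (V → V → ℝ),
          F ⊆ {w | ∃ σ : V ≃ Fin (n / 5) × ZMod 5, w = cycleW σ} ∧
          (2 : ℝ) ^ ((0.2 : ℝ) * (n : ℝ)) ≤ (Nat.card F : ℝ) ∧
          ∀ w ∈ F, ∀ w' ∈ F, w ≠ w' →
            ¬∃ T : BTree V, IsHC T ∧
              cost w T < (n : ℝ) ^ 2 / 400 ∧ cost w' T < (n : ℝ) ^ 2 / 400 := by
  classical
  refine ⟨1000000, ?_⟩
  intro n hn hdvd V instF instD hcard
  have hm : n = 5 * (n / 5) := by omega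
  have hm3 : 3 ≤ n / 5 := by omega
  obtain ⟨S, hSpair, hScard⟩ := HCPack.exists_family n (n / 5) hm (by omega) V hcard
  refine ⟨(fun σ => cycleW σ) '' (↑S : Set (V ≃ Fin (n / 5) × ZMod 5)), ?_, ?_, ?_⟩
  · rintro w ⟨σ, -, rfl⟩
    exact ⟨σ, rfl⟩
  · have hinj : Set.InjOn (fun σ : V ≃ Fin (n / 5) × ZMod 5 => cycleW σ)
        (↑S : Set (V ≃ Fin (n / 5) × ZMod 5)) := by
      intro σ hσ τ hτ heq
      by_contra hne
      exact hSpair σ (Finset.mem_coe.mp hσ) τ (Finset.mem_coe.mp hτ) hne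
        (HCPack.bad_of_weight_eq hm3 hm σ τ heq)
    have hcardF : Nat.card ((fun σ => cycleW σ) '' (↑S : Set (V ≃ Fin (n / 5) × ZMod 5)))
        = S.card := by
      rw [Nat.card_coe_set_eq, Set.ncard_image_of_injOn hinj, Set.ncard_coe_finset]
    rw [hcardF]
    have hexp : (0.2 : ℝ) * (n : ℝ) = ((n / 5 : ℕ) : ℝ) := by
      have h5 : (n : ℝ) = 5 * ((n / 5 : ℕ) : ℝ) := by exact_mod_cast hm
      rw [h5]
      ring
    rw [hexp, Real.rpow_natCast]
    have h2 : ((2 : ℕ) ^ (n / 5) : ℝ) ≤ (S.card : ℝ) := by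
      exact_mod_cast hScard
    calc (2 : ℝ) ^ (n / 5) = ((2 : ℕ) ^ (n / 5) : ℝ) := by push_cast; ring
      _ ≤ (S.card : ℝ) := h2
  · rintro w ⟨σ, hσS, rfl⟩ w' ⟨τ, hτS, rfl⟩ hne ⟨T, hT, h1, h2⟩
    have hστ : σ ≠ τ := fun h => hne (by rw [h])
    exact hSpair σ (Finset.mem_coe.mp hσS) τ (Finset.mem_coe.mp hτS) hστ
      (HCPack.bad_of_good_tree (by omega) hcard σ τ T hT h1 h2)
end

section
/- For any weighted graph G on V with |V| = n and any binary tree T with leaf set V: ω_G(T) = (1/2)·[ Σ over internal splits S → (S₁,S₂) of T of (|S₂|·w(S₁, V∖S₁) + |S₁|·w(S₂, V∖S₂)) ] + (1/2)·Σ_{v∈V} w({v}, V∖{v}). -/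
open Finset

/-- The sum, over all internal splits `S → (S₁,S₂)` of the tree, of
`|S₂|·w(S₁, V∖S₁) + |S₁|·w(S₂, V∖S₂)`. -/
noncomputable def splitCutSum {V : Type} [Fintype V] [DecidableEq V]
    (w : V → V → ℝ) : BTree V → ℝ
  | .leaf _ => 0
  | .node L R =>
      (R.leaves.card : ℝ) * cutW w L.leaves (L.leaves)ᶜ
        + (L.leaves.card : ℝ) * cutW w R.leaves (R.leaves)ᶜ
        + splitCutSum w L + splitCutSum w R

section AuxKey
variable {V : Type} [Fintype V] [DecidableEq V]

lemma leaves_node' (L R : BTree V) : (BTree.node L R).leaves = L.leaves ∪ R.leaves := by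
  simp [BTree.leaves, BTree.leavesList]

lemma cutW_union_left' (w : V → V → ℝ) {A B : Finset V} (h : Disjoint A B) (C : Finset V) :
    cutW w (A ∪ B) C = cutW w A C + cutW w B C :=
  Finset.sum_union h

lemma cutW_union_right' (w : V → V → ℝ) (C : Finset V) {A B : Finset V} (h : Disjoint A B) :
    cutW w C (A ∪ B) = cutW w C A + cutW w C B := by
  unfold cutW
  rw [← Finset.sum_add_distrib]
  exact Finset.sum_congr rfl fun a _ => Finset.sum_union h

lemma compl_decomp' {A B : Finset V} (h : Disjoint A B) :
    Aᶜ = B ∪ (A ∪ B)ᶜ := by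
  ext x
  simp only [Finset.mem_compl, Finset.mem_union]
  constructor
  · intro hx
    by_cases hB : x ∈ B
    · exact Or.inl hB
    · exact Or.inr fun hc => hc.elim hx hB
  · rintro (hB | h2) hA
    · exact Finset.disjoint_left.mp h hA hB
    · exact h2 (Or.inl hA)

noncomputable def pairSum (w : V → V → ℝ) (T : BTree V) : ℝ :=
  ∑ u ∈ T.leaves, ∑ v ∈ T.leaves, w u v * ((T.cluster u v).card : ℝ)

lemma key_cut_decomp (w : V → V → ℝ) (hw : IsWeight w) (T : BTree V) :
    T.leavesList.Nodup →
      pairSum w T + (T.leaves.card : ℝ) * cutW w T.leaves (T.leaves)ᶜ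
        = splitCutSum w T + ∑ u ∈ T.leaves, cutW w {u} ({u} : Finset V)ᶜ := by
  induction T with
  | leaf x =>
    intro _
    simp [pairSum, splitCutSum, BTree.leaves, BTree.leavesList, BTree.cluster, hw.2.2 x]
  | node L R ihl ihr =>
    intro hnd
    have hnd' : (L.leavesList ++ R.leavesList).Nodup := hnd
    rw [List.nodup_append] at hnd'
    obtain ⟨hL, hR, hdis⟩ := hnd'
    have hd : Disjoint L.leaves R.leaves := by
      rw [BTree.leaves, BTree.leaves, List.disjoint_toFinset_iff_disjoint]
      intro a ha hb
      exact hdis a ha a hb rfl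
    have ihL := ihl hL
    have ihR := ihr hR
    have hleaves : (BTree.node L R).leaves = L.leaves ∪ R.leaves := leaves_node' L R
    have hcardU : (((L.leaves ∪ R.leaves).card : ℕ) : ℝ)
        = (L.leaves.card : ℝ) + (R.leaves.card : ℝ) := by
      rw [Finset.card_union_of_disjoint hd]; push_cast; ring
    -- expand pairSum of node
    have e1 : pairSum w (BTree.node L R)
        = pairSum w L + pairSum w R
          + ((L.leaves.card : ℝ) + R.leaves.card)
            * (cutW w L.leaves R.leaves + cutW w R.leaves L.leaves) := by
      unfold pairSum
      rw [hleaves, Finset.sum_union hd]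
      have hA : ∀ u ∈ L.leaves,
          ∑ v ∈ L.leaves ∪ R.leaves, w u v * (((BTree.node L R).cluster u v).card : ℝ)
          = (∑ v ∈ L.leaves, w u v * ((L.cluster u v).card : ℝ))
            + ∑ v ∈ R.leaves, w u v * ((L.leaves.card : ℝ) + R.leaves.card) := by
        intro u hu
        rw [Finset.sum_union hd]
        congr 1
        · exact Finset.sum_congr rfl fun v hv => by
            have : (BTree.node L R).cluster u v = L.cluster u v := by
              simp [BTree.cluster, hu, hv]
            rw [this]
        · refine Finset.sum_congr rfl fun v hv => ?_
          have hvA : v ∉ L.leaves := Finset.disjoint_right.mp hd hv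
          have huB : u ∉ R.leaves := Finset.disjoint_left.mp hd hu
          have : (BTree.node L R).cluster u v = (BTree.node L R).leaves := by
            simp [BTree.cluster, hvA, huB]
          rw [this, hleaves, hcardU]
      have hB : ∀ u ∈ R.leaves,
          ∑ v ∈ L.leaves ∪ R.leaves, w u v * (((BTree.node L R).cluster u v).card : ℝ)
          = (∑ v ∈ L.leaves, w u v * ((L.leaves.card : ℝ) + R.leaves.card))
            + ∑ v ∈ R.leaves, w u v * ((R.cluster u v).card : ℝ) := by
        intro u hu
        rw [Finset.sum_union hd]
        congr 1
        · refine Finset.sum_congr rfl fun v hv => ?_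
          have huA : u ∉ L.leaves := Finset.disjoint_right.mp hd hu
          have hvB : v ∉ R.leaves := Finset.disjoint_left.mp hd hv
          have : (BTree.node L R).cluster u v = (BTree.node L R).leaves := by
            simp [BTree.cluster, huA, hvB]
          rw [this, hleaves, hcardU]
        · refine Finset.sum_congr rfl fun v hv => ?_
          have huA : u ∉ L.leaves := Finset.disjoint_right.mp hd hu
          have : (BTree.node L R).cluster u v = R.cluster u v := by
            simp [BTree.cluster, huA, hu, hv]
          rw [this]
      rw [Finset.sum_congr rfl hA, Finset.sum_congr rfl hB,
        Finset.sum_add_distrib, Finset.sum_add_distrib]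
      have hc1 : ∑ u ∈ L.leaves, ∑ v ∈ R.leaves,
          w u v * ((L.leaves.card : ℝ) + R.leaves.card)
          = ((L.leaves.card : ℝ) + R.leaves.card) * cutW w L.leaves R.leaves := by
        simp only [← Finset.sum_mul, cutW]
        ring
      have hc2 : ∑ u ∈ R.leaves, ∑ v ∈ L.leaves,
          w u v * ((L.leaves.card : ℝ) + R.leaves.card)
          = ((L.leaves.card : ℝ) + R.leaves.card) * cutW w R.leaves L.leaves := by
        simp only [← Finset.sum_mul, cutW]
        ring
      rw [hc1, hc2]
      ring
    -- cut decompositions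
    have hBU : Disjoint R.leaves (L.leaves ∪ R.leaves)ᶜ :=
      Disjoint.mono_left Finset.subset_union_right disjoint_compl_right
    have hAU : Disjoint L.leaves (L.leaves ∪ R.leaves)ᶜ :=
      Disjoint.mono_left Finset.subset_union_left disjoint_compl_right
    have hAc : cutW w L.leaves (L.leaves)ᶜ
        = cutW w L.leaves R.leaves + cutW w L.leaves (L.leaves ∪ R.leaves)ᶜ := by
      rw [compl_decomp' hd]
      exact cutW_union_right' w _ hBU
    have hBc : cutW w R.leaves (R.leaves)ᶜ
        = cutW w R.leaves L.leaves + cutW w R.leaves (L.leaves ∪ R.leaves)ᶜ := by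
      rw [compl_decomp' hd.symm, Finset.union_comm R.leaves L.leaves]
      exact cutW_union_right' w _ hAU
    have hUc : cutW w (L.leaves ∪ R.leaves) (L.leaves ∪ R.leaves)ᶜ
        = cutW w L.leaves (L.leaves ∪ R.leaves)ᶜ
          + cutW w R.leaves (L.leaves ∪ R.leaves)ᶜ :=
      cutW_union_left' w hd _
    rw [hAc] at ihL
    rw [hBc] at ihR
    rw [e1, hleaves, hcardU, hUc]
    show _ = (R.leaves.card : ℝ) * cutW w L.leaves (L.leaves)ᶜ
        + (L.leaves.card : ℝ) * cutW w R.leaves (R.leaves)ᶜ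
        + splitCutSum w L + splitCutSum w R + _
    rw [hAc, hBc, Finset.sum_union hd]
    linear_combination ihL + ihR

end AuxKey

/-- Cut decomposition of the Dasgupta cost:
`ω_G(T) = (1/2)·Σ_{splits S→(S₁,S₂)} (|S₂|·w(S₁,V∖S₁) + |S₁|·w(S₂,V∖S₂))
          + (1/2)·Σ_{v∈V} w({v}, V∖{v})`. -/
theorem cost_eq_cut_decomposition (V : Type) [Fintype V] [DecidableEq V] (n : ℕ)
    (hcard : Fintype.card V = n) (w : V → V → ℝ) (hw : IsWeight w)
    (T : BTree V) (hT : IsHC T) :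
    cost w T = (1 / 2) * splitCutSum w T + (1 / 2) * ∑ v : V, cutW w {v} ({v} : Finset V)ᶜ := by
  have hk := key_cut_decomp w hw T hT.1
  rw [hT.2] at hk
  have h0 : cutW w (Finset.univ : Finset V) (Finset.univ : Finset V)ᶜ = 0 := by
    simp [cutW]
  rw [h0, mul_zero, add_zero] at hk
  have hps : pairSum w T = ∑ u : V, ∑ v : V, w u v * ((T.cluster u v).card : ℝ) := by
    unfold pairSum
    rw [hT.2]
  unfold cost
  rw [← hps, hk, mul_add]
end
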